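/- arXiv:2202.01774 — 4 statements merged into one kernel-verified Lean document; each statement's English description precedes it below -/
import Mathlib

section
/- Let P be a finite multiset of vectors in ℝⁿ and suppose there exists v ∈ ℝⁿ with ⟨v, λ⟩ > 0 for all λ ∈ P. Then the map π : (ℝ_{≥0})^P → ℝⁿ, (x_λ) ↦ μ + Σ_λ x_λ λ, is a proper map for any μ ∈ ℝⁿ. -/
open scoped RealInnerProductSpace

/-- If a finite family of vectors `λ i` in `ℝⁿ` all have positive inner product with some
vector `v` (i.e. they lie in an open half-space), then for any `μ` the map
`π : (ℝ_{≥0})^P → ℝⁿ`, `(x_λ) ↦ μ + Σ_λ x_λ • λ`, is proper. -/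
theorem cone_map_proper {n : ℕ} {ι : Type*} [Fintype ι]
    (lam : ι → EuclideanSpace ℝ (Fin n)) (v : EuclideanSpace ℝ (Fin n))
    (hv : ∀ i, 0 < ⟪v, lam i⟫) (μ : EuclideanSpace ℝ (Fin n)) :
    IsProperMap (fun x : {x : ι → ℝ // ∀ i, 0 ≤ x i} =>
      μ + ∑ i, x.1 i • lam i) := by
  set f : (ι → ℝ) → EuclideanSpace ℝ (Fin n) := fun x => μ + ∑ i, x i • lam i with hf
  have hfc : Continuous f := by
    apply continuous_const.add
    exact continuous_finset_sum _ fun i _ => (continuous_apply i).smul continuous_const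
  rw [isProperMap_iff_isCompact_preimage]
  constructor
  · exact hfc.comp continuous_subtype_val
  · intro K hK
    have hsub : (fun x : {x : ι → ℝ // ∀ i, 0 ≤ x i} => μ + ∑ i, x.1 i • lam i)
        = f ∘ Subtype.val := rfl
    rw [hsub, Set.preimage_comp]
    rw [Topology.IsEmbedding.subtypeVal.isCompact_iff]
    have himg : ((Subtype.val : {x : ι → ℝ // ∀ i, 0 ≤ x i} → ι → ℝ) ''
          (Subtype.val ⁻¹' (f ⁻¹' K)) : Set (ι → ℝ))
        = {x | ∀ i, 0 ≤ x i} ∩ f ⁻¹' K := by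
      ext x
      constructor
      · rintro ⟨⟨y, hy⟩, hmem, rfl⟩
        exact ⟨hy, hmem⟩
      · rintro ⟨hx, hxK⟩
        exact ⟨⟨x, hx⟩, hxK, rfl⟩
    rw [himg]
    -- closedness
    have hclosed : IsClosed ({x : ι → ℝ | ∀ i, 0 ≤ x i} ∩ f ⁻¹' K) := by
      apply IsClosed.inter
      · have : {x : ι → ℝ | ∀ i, 0 ≤ x i} = ⋂ i, {x | 0 ≤ x i} := by
          ext x; simp
        rw [this]
        exact isClosed_iInter fun i => isClosed_le continuous_const (continuous_apply i)
      · exact hK.isClosed.preimage hfc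
    rcases isEmpty_or_nonempty ι with hι | hι
    · have : Subsingleton (ι → ℝ) := ⟨fun a b => funext fun i => (hι.false i).elim⟩
      exact (Set.toFinite _).isCompact
    -- bound
    obtain ⟨r, hr⟩ := hK.isBounded.subset_closedBall 0
    set c : ℝ := Finset.univ.inf' (Finset.univ_nonempty) (fun i => ⟪v, lam i⟫) with hc
    have hcpos : 0 < c := by
      rw [hc, Finset.lt_inf'_iff]
      exact fun i _ => hv i
    set C : ℝ := ‖v‖ * (r + ‖μ‖) / c with hC
    apply IsCompact.of_isClosed_subset (isCompact_univ_pi fun i : ι => isCompact_Icc (a := (0:ℝ)) (b := C)) hclosed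
    rintro x ⟨hx0, hxK⟩
    have hsum : ∀ i, x i * c ≤ ‖v‖ * (r + ‖μ‖) := by
      intro i
      have h1 : x i * c ≤ ∑ j, x j * ⟪v, lam j⟫ := by
        calc x i * c ≤ x i * ⟪v, lam i⟫ :=
              mul_le_mul_of_nonneg_left (Finset.inf'_le _ (Finset.mem_univ i)) (hx0 i)
          _ ≤ ∑ j, x j * ⟪v, lam j⟫ :=
              Finset.single_le_sum (fun j _ => mul_nonneg (hx0 j) (hv j).le) (Finset.mem_univ i)
      have h2 : ∑ j, x j * ⟪v, lam j⟫ = ⟪v, f x - μ⟫ := by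
        simp only [hf, add_sub_cancel_left, inner_sum, real_inner_smul_right]
      have h3 : ⟪v, f x - μ⟫ ≤ ‖v‖ * ‖f x - μ‖ := real_inner_le_norm _ _
      have h4 : ‖f x - μ‖ ≤ r + ‖μ‖ := by
        have : ‖f x‖ ≤ r := by
          have := hr hxK
          simpa [Metric.mem_closedBall] using this
        calc ‖f x - μ‖ ≤ ‖f x‖ + ‖μ‖ := norm_sub_le _ _
          _ ≤ r + ‖μ‖ := by linarith
      calc x i * c ≤ ⟪v, f x - μ⟫ := h2 ▸ h1
        _ ≤ ‖v‖ * ‖f x - μ‖ := h3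
        _ ≤ ‖v‖ * (r + ‖μ‖) := mul_le_mul_of_nonneg_left h4 (norm_nonneg v)
    intro i _
    refine ⟨hx0 i, ?_⟩
    rw [hC, le_div_iff₀ hcpos]
    exact hsum i
end

section
/- Let P be a finite multiset of nonzero vectors in ℝⁿ all lying in an open half-space {w : ⟨v,w⟩ > 0} for some v. Then the pushforward of Lebesgue measure on (ℝ_{≥0})^P under π : (x_λ) ↦ μ + Σ_λ x_λ λ is a locally finite (Radon) measure on ℝⁿ. -/
open MeasureTheory
open scoped RealInnerProductSpace

/-- If a finite family of nonzero vectors `λ i` in `ℝⁿ` all lie in the open half-space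
`{w : ⟪v,w⟫ > 0}`, then the pushforward of Lebesgue measure on `(ℝ_{≥0})^P` under
`π : (x_λ) ↦ μ + Σ_λ x_λ • λ` is a locally finite measure on `ℝⁿ`. -/
theorem cone_measure_locally_finite {n : ℕ} {ι : Type*} [Fintype ι]
    (lam : ι → EuclideanSpace ℝ (Fin n)) (hlam : ∀ i, lam i ≠ 0)
    (v : EuclideanSpace ℝ (Fin n)) (hv : ∀ i, 0 < ⟪v, lam i⟫)
    (μ : EuclideanSpace ℝ (Fin n)) :
    IsLocallyFiniteMeasure
      (Measure.map (fun x : ι → ℝ => μ + ∑ i, x i • lam i)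
        (volume.restrict {x : ι → ℝ | ∀ i, 0 ≤ x i})) := by
  have hπ : Measurable (fun x : ι → ℝ => μ + ∑ i, x i • lam i) :=
    measurable_const.add (Finset.measurable_sum _ fun i _ =>
      (measurable_pi_apply i).smul_const (lam i))
  obtain ⟨c, hc0, hc⟩ : ∃ c > 0, ∀ i, c ≤ ⟪v, lam i⟫ := by
    cases isEmpty_or_nonempty ι with
    | inl h => exact ⟨1, one_pos, fun i => (h.elim i)⟩
    | inr h =>
      obtain ⟨i₀, -, hmin⟩ := Finset.exists_min_image Finset.univ
        (fun i => ⟪v, lam i⟫) ⟨Classical.arbitrary ι, Finset.mem_univ _⟩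
      exact ⟨_, hv i₀, fun i => hmin i (Finset.mem_univ i)⟩
  constructor
  intro y
  set K := ‖v‖ * (1 + ‖y - μ‖) / c with hK
  refine ⟨Metric.ball y 1, Metric.ball_mem_nhds y one_pos, ?_⟩
  rw [Measure.map_apply hπ measurableSet_ball,
    Measure.restrict_apply (hπ measurableSet_ball)]
  have hsub : (fun x : ι → ℝ => μ + ∑ i, x i • lam i) ⁻¹' Metric.ball y 1 ∩
      {x : ι → ℝ | ∀ i, 0 ≤ x i} ⊆ Set.pi Set.univ (fun _ => Set.Icc (0:ℝ) K) := by
    rintro x ⟨hx1, hx2⟩ i -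
    refine ⟨hx2 i, ?_⟩
    have hball : ‖μ + ∑ j, x j • lam j - y‖ < 1 := by
      simpa [dist_eq_norm] using hx1
    have hnorm : ‖∑ j, x j • lam j‖ ≤ 1 + ‖y - μ‖ := by
      have hrw : (∑ j, x j • lam j) = (μ + ∑ j, x j • lam j - y) + (y - μ) := by abel
      rw [hrw]
      have := norm_add_le (μ + ∑ j, x j • lam j - y) (y - μ)
      linarith
    have hinner : ⟪v, ∑ j, x j • lam j⟫ = ∑ j, x j * ⟪v, lam j⟫ := by
      rw [inner_sum]
      exact Finset.sum_congr rfl fun j _ => real_inner_smul_right v (lam j) (x j)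
    have hCS : ⟪v, ∑ j, x j • lam j⟫ ≤ ‖v‖ * (1 + ‖y - μ‖) :=
      (real_inner_le_norm _ _).trans
        (mul_le_mul_of_nonneg_left hnorm (norm_nonneg v))
    have hxi : x i * c ≤ ∑ j, x j * ⟪v, lam j⟫ := by
      calc x i * c ≤ x i * ⟪v, lam i⟫ :=
            mul_le_mul_of_nonneg_left (hc i) (hx2 i)
        _ ≤ ∑ j, x j * ⟪v, lam j⟫ :=
            Finset.single_le_sum (f := fun j => x j * ⟪v, lam j⟫)
              (fun j _ => mul_nonneg (hx2 j) (hv j).le) (Finset.mem_univ i)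
    rw [hK, le_div_iff₀ hc0]
    linarith [hinner ▸ hxi]
  calc volume ((fun x : ι → ℝ => μ + ∑ i, x i • lam i) ⁻¹' Metric.ball y 1 ∩
          {x : ι → ℝ | ∀ i, 0 ≤ x i})
      ≤ volume (Set.pi Set.univ (fun _ : ι => Set.Icc (0:ℝ) K)) := measure_mono hsub
    _ < ⊤ := by
        rw [volume_pi_pi]
        exact ENNReal.prod_lt_top fun i _ => by simp [Real.volume_Icc]
end

section
/- Let f be a locally finite measure on ℝⁿ supported inside a pointed (salient) closed convex cone C translated by some vector, and suppose f is invariant under translation by some nonzero vector ν ∈ ℝⁿ. Then f = 0. -/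
open MeasureTheory
open scoped Pointwise

/-- A locally finite measure on `ℝⁿ` supported inside a translate `μ + C` of a pointed
(salient) closed convex cone `C`, and invariant under translation by some nonzero
vector `ν`, must vanish. -/
theorem measure_in_pointed_cone_translation_invariant_eq_zero {n : ℕ}
    (f : Measure (EuclideanSpace ℝ (Fin n))) [IsLocallyFiniteMeasure f]
    (C : Set (EuclideanSpace ℝ (Fin n)))
    (hconv : Convex ℝ C) (hcone : ∀ x ∈ C, ∀ t : ℝ, 0 ≤ t → t • x ∈ C)
    (hclosed : IsClosed C)
    (hpointed : ∀ x ∈ C, -x ∈ C → x = 0)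
    (μ : EuclideanSpace ℝ (Fin n))
    (hsupp : f (({μ} + C)ᶜ) = 0)
    (ν : EuclideanSpace ℝ (Fin n)) (hν : ν ≠ 0)
    (hinv : Measure.map (fun x => x + ν) f = f) :
    f = 0 := by
  -- characterize translates of the cone
  have hset : ∀ c : EuclideanSpace ℝ (Fin n), ({c} + C) = {x | x - c ∈ C} := by
    intro c
    ext x
    simp only [Set.mem_add, Set.mem_singleton_iff, Set.mem_setOf_eq]
    constructor
    · rintro ⟨y, rfl, z, hz, rfl⟩
      simpa using hz
    · intro h
      exact ⟨c, rfl, x - c, h, by abel⟩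
  have hmeasC : ∀ c : EuclideanSpace ℝ (Fin n),
      MeasurableSet ({x | x - c ∈ C}ᶜ : Set (EuclideanSpace ℝ (Fin n))) := by
    intro c
    exact ((hclosed.preimage (continuous_id.sub continuous_const)).measurableSet).compl
  -- one translation step
  have hstep : ∀ c : EuclideanSpace ℝ (Fin n),
      f ({x | x - (c - ν) ∈ C}ᶜ) = f ({x | x - c ∈ C}ᶜ) := by
    intro c
    have hm : Measurable (fun x : EuclideanSpace ℝ (Fin n) => x + ν) :=
      measurable_id.add_const ν
    conv_rhs => rw [← hinv]
    rw [Measure.map_apply hm (hmeasC c)]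
    congr 1
    ext x
    simp only [Set.mem_preimage, Set.mem_compl_iff, Set.mem_setOf_eq]
    rw [show x + ν - c = x - (c - ν) from by abel]
  -- null on every integer translate
  have key : ∀ k : ℤ, f ({x | x - (μ + k • ν) ∈ C}ᶜ) = 0 := by
    have base : f ({x | x - μ ∈ C}ᶜ) = 0 := by
      rw [hset] at hsupp; exact hsupp
    intro k
    induction k using Int.induction_on with
    | zero => simpa using base
    | succ k ih =>
        have := hstep (μ + ((k : ℤ) + 1) • ν)
        rw [show μ + ((k : ℤ) + 1) • ν - ν = μ + (k : ℤ) • ν from by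
          rw [add_smul, one_smul]; abel] at this
        rw [← this]
        exact ih
    | pred k ih =>
        have := hstep (μ + (-(k : ℤ)) • ν)
        rw [show μ + (-(k : ℤ)) • ν - ν = μ + (-(k : ℤ) - 1) • ν from by
          rw [sub_smul, one_smul]; abel] at this
        rw [this]
        exact ih
  -- the intersection of all translates is empty
  have hcover : (Set.univ : Set (EuclideanSpace ℝ (Fin n))) ⊆
      ⋃ k : ℤ, ({x | x - (μ + k • ν) ∈ C}ᶜ) := by
    intro x _
    by_contra hx
    simp only [Set.mem_iUnion, Set.mem_compl_iff, Set.mem_setOf_eq, not_exists, not_not] at hx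
    -- hx : ∀ k : ℤ, x - (μ + k • ν) ∈ C
    have hpos : ∀ m : ℕ, 1 ≤ m → (m : ℝ)⁻¹ • (x - μ) - ν ∈ C := by
      intro m hm
      have hm0 : (m : ℝ) ≠ 0 := Nat.cast_ne_zero.mpr (by omega)
      have h1 := hcone _ (hx (m : ℤ)) ((m : ℝ)⁻¹) (by positivity)
      have : (m : ℝ)⁻¹ • (x - (μ + (m : ℤ) • ν)) = (m : ℝ)⁻¹ • (x - μ) - ν := by
        rw [show x - (μ + (m : ℤ) • ν) = (x - μ) - (m : ℤ) • ν from by abel,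
          smul_sub, ← Int.cast_smul_eq_zsmul ℝ, smul_smul]
        push_cast
        rw [inv_mul_cancel₀ hm0, one_smul]
      rwa [this] at h1
    have hneg : ∀ m : ℕ, 1 ≤ m → (m : ℝ)⁻¹ • (x - μ) + ν ∈ C := by
      intro m hm
      have hm0 : (m : ℝ) ≠ 0 := Nat.cast_ne_zero.mpr (by omega)
      have h1 := hcone _ (hx (-(m : ℤ))) ((m : ℝ)⁻¹) (by positivity)
      have : (m : ℝ)⁻¹ • (x - (μ + (-(m : ℤ)) • ν)) = (m : ℝ)⁻¹ • (x - μ) + ν := by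
        rw [show x - (μ + (-(m : ℤ)) • ν) = (x - μ) + (m : ℤ) • ν from by
          rw [neg_smul]; abel,
          smul_add, ← Int.cast_smul_eq_zsmul ℝ, smul_smul]
        push_cast
        rw [inv_mul_cancel₀ hm0, one_smul]
      rwa [this] at h1
    have htend0 : Filter.Tendsto (fun m : ℕ => (m : ℝ)⁻¹ • (x - μ))
        Filter.atTop (nhds 0) := by
      have := (tendsto_inv_atTop_nhds_zero_nat (𝕜 := ℝ)).smul_const (x - μ)
      simpa using this
    have htend1 : Filter.Tendsto (fun m : ℕ => (m : ℝ)⁻¹ • (x - μ) - ν)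
        Filter.atTop (nhds (-ν)) := by
      have := htend0.sub_const ν
      simpa using this
    have htend2 : Filter.Tendsto (fun m : ℕ => (m : ℝ)⁻¹ • (x - μ) + ν)
        Filter.atTop (nhds ν) := by
      have := htend0.add_const ν
      simpa using this
    have hmemneg : -ν ∈ C :=
      hclosed.mem_of_tendsto htend1 (Filter.eventually_atTop.mpr ⟨1, hpos⟩)
    have hmempos : ν ∈ C :=
      hclosed.mem_of_tendsto htend2 (Filter.eventually_atTop.mpr ⟨1, hneg⟩)
    exact hν (hpointed ν hmempos hmemneg)
  have huniv : f Set.univ = 0 :=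
    measure_mono_null hcover (measure_iUnion_null fun k => key k)
  exact Measure.measure_univ_eq_zero.mp huniv
end

section
/- Let P = {λ₁,…,λ_k} be linearly independent vectors in ℝⁿ and μ ∈ ℝⁿ. Applying the composite differencing operator ∂_{λ₁}∘⋯∘∂_{λ_k} to the cone measure cone(μ, P) yields the k-dimensional Lebesgue measure on the half-open parallelepiped {μ + Σ t_i λ_i : 0 ≤ t_i < 1}, suitably normalized; in particular the result is a compactly supported measure. -/
open MeasureTheory Set

lemma count_lemma {α : Type*} [DecidableEq α] (T : Finset α) :
    (T.powerset.filter fun S => Even S.card).card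
      = (if T = ∅ then 1 else 0) + (T.powerset.filter fun S => ¬ Even S.card).card := by
  have h := Finset.sum_powerset_neg_one_pow_card (x := T)
  rw [← Finset.sum_filter_add_sum_filter_not T.powerset (fun S => Even S.card)] at h
  rw [Finset.sum_congr rfl (fun m hm => (Finset.mem_filter.1 hm).2.neg_one_pow),
      Finset.sum_congr rfl
        (fun m hm => (Nat.not_even_iff_odd.1 (Finset.mem_filter.1 hm).2).neg_one_pow)] at h
  simp only [Finset.sum_const, nsmul_eq_mul, mul_one, mul_neg_one] at h
  split_ifs at h ⊢ <;> omega

lemma pointwise_lemma {k : ℕ} (x : Fin k → ℝ) :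
    ∑ S ∈ (Finset.univ : Finset (Fin k)).powerset.filter (fun S => Even S.card),
      Set.indicator {y : Fin k → ℝ | ∀ i, (if i ∈ S then (1:ℝ) else 0) ≤ y i}
        (1 : (Fin k → ℝ) → ENNReal) x
    = Set.indicator {y : Fin k → ℝ | ∀ i, 0 ≤ y i ∧ y i < 1} (1 : (Fin k → ℝ) → ENNReal) x
      + ∑ S ∈ (Finset.univ : Finset (Fin k)).powerset.filter (fun S => ¬ Even S.card),
          Set.indicator {y : Fin k → ℝ | ∀ i, (if i ∈ S then (1:ℝ) else 0) ≤ y i}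
            (1 : (Fin k → ℝ) → ENNReal) x := by
  by_cases h0 : ∀ i, 0 ≤ x i
  · set T : Finset (Fin k) := Finset.univ.filter (fun i => 1 ≤ x i) with hT
    have hind : ∀ S : Finset (Fin k),
        Set.indicator {y : Fin k → ℝ | ∀ i, (if i ∈ S then (1:ℝ) else 0) ≤ y i}
          (1 : (Fin k → ℝ) → ENNReal) x = if S ⊆ T then 1 else 0 := by
      intro S
      by_cases hS : S ⊆ T
      · rw [if_pos hS, Set.indicator_of_mem]
        · rfl
        · intro i
          by_cases hi : i ∈ S
          · simpa [hi] using (Finset.mem_filter.1 (hS hi)).2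
          · simpa [hi] using h0 i
      · rw [if_neg hS, Set.indicator_of_notMem]
        intro hx
        apply hS
        intro i hi
        have := hx i
        rw [if_pos hi] at this
        exact Finset.mem_filter.2 ⟨Finset.mem_univ i, this⟩
    have hbox : Set.indicator {y : Fin k → ℝ | ∀ i, 0 ≤ y i ∧ y i < 1}
        (1 : (Fin k → ℝ) → ENNReal) x = if T = ∅ then 1 else 0 := by
      by_cases hTe : T = ∅
      · rw [if_pos hTe, Set.indicator_of_mem]
        · rfl
        · intro i
          refine ⟨h0 i, ?_⟩
          by_contra hlt
          have : i ∈ T := Finset.mem_filter.2 ⟨Finset.mem_univ i, not_lt.1 hlt⟩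
          simp [hTe] at this
      · rw [if_neg hTe, Set.indicator_of_notMem]
        intro hx
        obtain ⟨i, hi⟩ := Finset.nonempty_iff_ne_empty.2 hTe
        exact absurd (Finset.mem_filter.1 hi).2 (not_le.2 (hx i).2)
    have hfilt : ∀ p : Finset (Fin k) → Prop, (hp : DecidablePred p) →
        ((Finset.univ : Finset (Fin k)).powerset.filter p).filter (· ⊆ T)
          = T.powerset.filter p := by
      intro p hp
      ext S
      simp only [Finset.mem_filter, Finset.mem_powerset, Finset.subset_univ, true_and]
      tauto
    simp only [hind, hbox]
    rw [Finset.sum_boole, Finset.sum_boole, hfilt, hfilt]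
    have h := count_lemma T
    split_ifs with hTe
    · rw [if_pos hTe] at h
      exact_mod_cast h
    · rw [if_neg hTe] at h
      exact_mod_cast h
  · push_neg at h0
    obtain ⟨i, hi⟩ := h0
    have hz : ∀ S : Finset (Fin k),
        Set.indicator {y : Fin k → ℝ | ∀ i, (if i ∈ S then (1:ℝ) else 0) ≤ y i}
          (1 : (Fin k → ℝ) → ENNReal) x = 0 := by
      intro S
      apply Set.indicator_of_notMem
      intro hx
      have h1 : (0:ℝ) ≤ if i ∈ S then (1:ℝ) else 0 := by split <;> norm_num
      exact absurd (le_trans h1 (hx i)) (not_le.2 hi)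
    have hz2 : Set.indicator {y : Fin k → ℝ | ∀ i, 0 ≤ y i ∧ y i < 1}
        (1 : (Fin k → ℝ) → ENNReal) x = 0 := by
      apply Set.indicator_of_notMem
      intro hx
      exact absurd (hx i).1 (not_le.2 hi)
    simp [hz, hz2]
/-- Applying the composite differencing operator `∂_{λ₁} ∘ ⋯ ∘ ∂_{λ_k}` to the cone
measure `cone(μ, P)` for linearly independent `λ₁, …, λ_k` yields the (suitably
normalized) Lebesgue measure on the half-open parallelepiped
`{μ + Σ tᵢ λᵢ : 0 ≤ tᵢ < 1}`, in particular a compactly supported measure.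
Expanding `∏ᵢ (1 - T_{λᵢ})` and moving negative terms to the other side, this reads:
`Σ_{S even} (cone translated by Σ_{i∈S} λᵢ) = Ppd + Σ_{S odd} (cone translated by Σ_{i∈S} λᵢ)`,
where `Ppd` is the pushforward of Lebesgue measure on `[0,1)^k` under
`(tᵢ) ↦ μ + Σ tᵢ λᵢ`. -/
theorem cone_iterated_differencing {n k : ℕ}
    (lam : Fin k → EuclideanSpace ℝ (Fin n)) (hlam : LinearIndependent ℝ lam)
    (μ : EuclideanSpace ℝ (Fin n)) :
    (∑ S ∈ (Finset.univ : Finset (Fin k)).powerset.filter (fun S => Even S.card),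
        Measure.map (fun x => x + ∑ i ∈ S, lam i)
          (Measure.map (fun x : Fin k → ℝ => μ + ∑ i, x i • lam i)
            (volume.restrict {x : Fin k → ℝ | ∀ i, 0 ≤ x i})))
      = Measure.map (fun x : Fin k → ℝ => μ + ∑ i, x i • lam i)
          (volume.restrict {x : Fin k → ℝ | ∀ i, 0 ≤ x i ∧ x i < 1})
        + (∑ S ∈ (Finset.univ : Finset (Fin k)).powerset.filter (fun S => ¬ Even S.card),
            Measure.map (fun x => x + ∑ i ∈ S, lam i)
              (Measure.map (fun x : Fin k → ℝ => μ + ∑ i, x i • lam i)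
                (volume.restrict {x : Fin k → ℝ | ∀ i, 0 ≤ x i}))) ∧
    ∃ K : Set (EuclideanSpace ℝ (Fin n)), IsCompact K ∧
      Measure.map (fun x : Fin k → ℝ => μ + ∑ i, x i • lam i)
        (volume.restrict {x : Fin k → ℝ | ∀ i, 0 ≤ x i ∧ x i < 1}) Kᶜ = 0 := by
  classical
  set φ : (Fin k → ℝ) → EuclideanSpace ℝ (Fin n) := fun x => μ + ∑ i, x i • lam i with hφdef
  have hφc : Continuous φ :=
    continuous_const.add (continuous_finset_sum _ fun i _ =>
      (continuous_apply i).smul continuous_const)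
  have hφ : Measurable φ := hφc.measurable
  -- measurable sets
  have hCS : ∀ S : Finset (Fin k),
      MeasurableSet {x : Fin k → ℝ | ∀ i, (if i ∈ S then (1:ℝ) else 0) ≤ x i} := by
    intro S
    have : {x : Fin k → ℝ | ∀ i, (if i ∈ S then (1:ℝ) else 0) ≤ x i}
        = ⋂ i, (fun x : Fin k → ℝ => x i) ⁻¹' Set.Ici (if i ∈ S then (1:ℝ) else 0) := by
      ext x; simp [Set.mem_iInter]
    rw [this]
    exact MeasurableSet.iInter fun i => (measurable_pi_apply i) measurableSet_Ici
  have hC : MeasurableSet {x : Fin k → ℝ | ∀ i, 0 ≤ x i} := by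
    have : {x : Fin k → ℝ | ∀ i, 0 ≤ x i}
        = ⋂ i, (fun x : Fin k → ℝ => x i) ⁻¹' Set.Ici (0:ℝ) := by
      ext x; simp [Set.mem_iInter]
    rw [this]
    exact MeasurableSet.iInter fun i => (measurable_pi_apply i) measurableSet_Ici
  have hbox : MeasurableSet {x : Fin k → ℝ | ∀ i, 0 ≤ x i ∧ x i < 1} := by
    have : {x : Fin k → ℝ | ∀ i, 0 ≤ x i ∧ x i < 1}
        = ⋂ i, (fun x : Fin k → ℝ => x i) ⁻¹' Set.Ico (0:ℝ) 1 := by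
      ext x; simp [Set.mem_iInter]
    rw [this]
    exact MeasurableSet.iInter fun i => (measurable_pi_apply i) measurableSet_Ico
  constructor
  · ext B hB
    have hDB : MeasurableSet (φ ⁻¹' B) := hφ hB
    -- the key computation for each S
    have key : ∀ S : Finset (Fin k),
        Measure.map (fun x => x + ∑ i ∈ S, lam i)
          (Measure.map φ (volume.restrict {x : Fin k → ℝ | ∀ i, 0 ≤ x i})) B
        = (volume.restrict (φ ⁻¹' B))
            {x : Fin k → ℝ | ∀ i, (if i ∈ S then (1:ℝ) else 0) ≤ x i} := by
      intro S
      rw [Measure.map_apply (measurable_add_const _) hB,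
        Measure.map_apply hφ ((measurable_add_const _) hB),
        Measure.restrict_apply' hC]
      have hset : φ ⁻¹' ((fun y => y + ∑ i ∈ S, lam i) ⁻¹' B) ∩ {x : Fin k → ℝ | ∀ i, 0 ≤ x i}
          = (fun x : Fin k → ℝ => x + fun i => if i ∈ S then (1:ℝ) else 0) ⁻¹'
              (φ ⁻¹' B ∩ {x : Fin k → ℝ | ∀ i, (if i ∈ S then (1:ℝ) else 0) ≤ x i}) := by
        ext x
        have hadd : φ (x + fun i => if i ∈ S then (1:ℝ) else 0) = φ x + ∑ i ∈ S, lam i := by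
          simp only [hφdef, Pi.add_apply, add_smul, Finset.sum_add_distrib, ite_smul, one_smul,
            zero_smul, Finset.sum_ite_mem, Finset.univ_inter, add_assoc]
        simp only [Set.mem_inter_iff, Set.mem_preimage, Set.mem_setOf_eq, Pi.add_apply, hadd,
          le_add_iff_nonneg_left]
      rw [hset, measure_preimage_add_right,
        Measure.restrict_apply' hDB, Set.inter_comm]
    have keybox :
        Measure.map φ (volume.restrict {x : Fin k → ℝ | ∀ i, 0 ≤ x i ∧ x i < 1}) B
        = (volume.restrict (φ ⁻¹' B)) {x : Fin k → ℝ | ∀ i, 0 ≤ x i ∧ x i < 1} := by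
      rw [Measure.map_apply hφ hB, Measure.restrict_apply' hbox,
        Measure.restrict_apply' hDB, Set.inter_comm]
    rw [Measure.finset_sum_apply, Measure.add_apply, Measure.finset_sum_apply, keybox]
    simp only [key]
    set ν := volume.restrict (φ ⁻¹' B) with hν
    calc ∑ S ∈ (Finset.univ : Finset (Fin k)).powerset.filter (fun S => Even S.card),
          ν {x : Fin k → ℝ | ∀ i, (if i ∈ S then (1:ℝ) else 0) ≤ x i}
        = ∫⁻ x, ∑ S ∈ (Finset.univ : Finset (Fin k)).powerset.filter (fun S => Even S.card),
            Set.indicator {y : Fin k → ℝ | ∀ i, (if i ∈ S then (1:ℝ) else 0) ≤ y i}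
              (1 : (Fin k → ℝ) → ENNReal) x ∂ν := by
          rw [lintegral_finset_sum _ (fun S _ => measurable_one.indicator (hCS S))]
          exact Finset.sum_congr rfl fun S _ => (lintegral_indicator_one (hCS S)).symm
      _ = ∫⁻ x, (Set.indicator {y : Fin k → ℝ | ∀ i, 0 ≤ y i ∧ y i < 1}
              (1 : (Fin k → ℝ) → ENNReal) x
            + ∑ S ∈ (Finset.univ : Finset (Fin k)).powerset.filter (fun S => ¬ Even S.card),
                Set.indicator {y : Fin k → ℝ | ∀ i, (if i ∈ S then (1:ℝ) else 0) ≤ y i}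
                  (1 : (Fin k → ℝ) → ENNReal) x) ∂ν := by
          exact lintegral_congr fun x => pointwise_lemma x
      _ = ν {x : Fin k → ℝ | ∀ i, 0 ≤ x i ∧ x i < 1}
            + ∑ S ∈ (Finset.univ : Finset (Fin k)).powerset.filter (fun S => ¬ Even S.card),
              ν {x : Fin k → ℝ | ∀ i, (if i ∈ S then (1:ℝ) else 0) ≤ x i} := by
          rw [lintegral_add_left (measurable_one.indicator hbox),
            lintegral_indicator_one hbox,
            lintegral_finset_sum _ (fun S _ => measurable_one.indicator (hCS S))]
          exact congrArg _ (Finset.sum_congr rfl fun S _ => lintegral_indicator_one (hCS S))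
  · refine ⟨φ '' Set.Icc 0 1, isCompact_Icc.image hφc, ?_⟩
    rw [Measure.map_apply hφ (isCompact_Icc.image hφc).isClosed.measurableSet.compl,
      Measure.restrict_apply' hbox]
    convert measure_empty
    · rw [Set.eq_empty_iff_forall_notMem]
      rintro x ⟨hx1, hx2⟩
      exact hx1 ⟨x, ⟨fun i => (hx2 i).1, fun i => (hx2 i).2.le⟩, rfl⟩
    · infer_instance
end
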